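/- Let E be a finite-dimensional complex vector space and let A : E → E be a linear map whose spectrum is contained in Σ₁. Then the linear map ψ(A) := Σ_{k=1}^∞ ((2πi)^k / k!) · A^{k−1} is invertible. -/

import Mathlib

open Complex

noncomputable section

/-- The set Σ: complex numbers `α` with `-1 ≤ Re α ≤ 0`, `Im α ≥ 0` if `Re α = -1`,
and `Im α < 0` if `Re α = 0`. -/
def SigmaSet : Set ℂ :=
  {α : ℂ | -1 ≤ α.re ∧ α.re ≤ 0 ∧ (α.re = -1 → 0 ≤ α.im) ∧ (α.re = 0 → α.im < 0)}

/-- The set Σ₁ := Σ + 1. -/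
def Sigma1 : Set ℂ := {α : ℂ | α - 1 ∈ SigmaSet}

/-- The constant `2πi`. -/
def twoPiI : ℂ := 2 * Real.pi * Complex.I

/-- The exponential `exp(2πi·f)` of an endomorphism `f`. -/
def expEnd {E : Type*} [NormedAddCommGroup E] [NormedSpace ℂ E] (f : E →L[ℂ] E) :
    E →L[ℂ] E :=
  NormedSpace.exp (twoPiI • f)

/-- The power series `ψ(A) := ∑_{k=1}^∞ ((2πi)^k / k!) A^(k-1)`. It satisfies
`A·ψ(A) = ψ(A)·A = exp(2πi·A) − Id`. -/
def psiEnd {E : Type*} [NormedAddCommGroup E] [NormedSpace ℂ E] (A : E →L[ℂ] E) :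
    E →L[ℂ] E :=
  ∑' k : ℕ, ((twoPiI ^ (k + 1) / (Nat.factorial (k + 1) : ℂ)) • A ^ k)

/-- The scalar function `ψ(μ) = ∑_{k≥0} (2πi)^(k+1) μ^k / (k+1)!`. -/
def psiC (μ : ℂ) : ℂ := ∑' k : ℕ, twoPiI ^ (k + 1) / (Nat.factorial (k + 1) : ℂ) * μ ^ k

lemma norm_twoPiI : ‖twoPiI‖ = 2 * Real.pi := by
  rw [twoPiI]
  rw [norm_mul, norm_mul, Complex.norm_I]
  simp [_root_.abs_of_nonneg Real.pi_pos.le]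

lemma twoPiI_ne_zero : twoPiI ≠ 0 := by
  simp [twoPiI, Real.pi_ne_zero, Complex.I_ne_zero, Complex.ofReal_ne_zero]

lemma summable_psi_aux {𝔸 : Type*} [NormedRing 𝔸] [NormedAlgebra ℂ 𝔸] [CompleteSpace 𝔸]
    (a : 𝔸) : Summable (fun k : ℕ => (twoPiI ^ (k + 1) / (Nat.factorial (k + 1) : ℂ)) • a ^ k) := by
  set C : ℝ := max 1 ‖(1 : 𝔸)‖ with hC
  have hC1 : (1:ℝ) ≤ C := le_max_left _ _
  apply Summable.of_norm
  refine Summable.of_nonneg_of_le (fun k => norm_nonneg _) (fun k => ?_)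
    (((Real.summable_pow_div_factorial (2 * Real.pi * ‖a‖)).mul_left (2 * Real.pi * C)))
  rw [norm_smul, norm_div, norm_pow, norm_twoPiI]
  have hak : ‖a ^ k‖ ≤ C * ‖a‖ ^ k := by
    rcases Nat.eq_zero_or_pos k with hk | hk
    · subst hk
      simp only [pow_zero, mul_one]
      exact le_max_right 1 ‖(1:𝔸)‖
    · calc ‖a ^ k‖ ≤ ‖a‖ ^ k := norm_pow_le' a hk
        _ ≤ C * ‖a‖ ^ k := by nlinarith [pow_nonneg (norm_nonneg a) k]
  have hfac : ‖((Nat.factorial (k+1) : ℂ))‖ = (Nat.factorial (k+1) : ℝ) := by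
    simp
  rw [hfac]
  have h1 : (2 * Real.pi) ^ (k + 1) / (Nat.factorial (k+1)) * ‖a ^ k‖
      ≤ (2 * Real.pi) ^ (k + 1) / (Nat.factorial (k+1)) * (C * ‖a‖ ^ k) := by
    apply mul_le_mul_of_nonneg_left hak
    positivity
  refine h1.trans ?_
  have h2 : (Nat.factorial k : ℝ) ≤ (Nat.factorial (k+1) : ℝ) := by
    exact_mod_cast Nat.factorial_le (Nat.le_succ k)
  have h3 : (2 * Real.pi) ^ (k + 1) / (Nat.factorial (k+1)) * (C * ‖a‖ ^ k)
      ≤ (2 * Real.pi) ^ (k + 1) / (Nat.factorial k) * (C * ‖a‖ ^ k) := by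
    apply mul_le_mul_of_nonneg_right _ (by positivity)
    apply div_le_div_of_nonneg_left (by positivity) (by positivity) h2
  refine h3.trans (le_of_eq ?_)
  rw [pow_succ, mul_pow]
  ring

lemma summable_psiC (μ : ℂ) :
    Summable (fun k : ℕ => twoPiI ^ (k + 1) / (Nat.factorial (k + 1) : ℂ) * μ ^ k) := by
  simpa [smul_eq_mul] using summable_psi_aux μ

lemma psiC_zero : psiC 0 = twoPiI := by
  rw [psiC, tsum_eq_single 0]
  · norm_num
  · intro k hk
    rcases Nat.exists_eq_succ_of_ne_zero hk with ⟨m, rfl⟩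
    simp [pow_succ]

lemma mul_psiC (μ : ℂ) : μ * psiC μ = Complex.exp (twoPiI * μ) - 1 := by
  have hsum : Summable (fun n : ℕ => (twoPiI * μ) ^ n / (Nat.factorial n : ℂ)) :=
    NormedSpace.expSeries_div_summable (twoPiI * μ)
  have hexp : Complex.exp (twoPiI * μ) = ∑' n : ℕ, (twoPiI * μ) ^ n / (Nat.factorial n : ℂ) := by
    rw [Complex.exp_eq_exp_ℂ, NormedSpace.exp_eq_tsum_div]
  rw [hexp, Summable.tsum_eq_zero_add hsum]
  simp only [pow_zero, Nat.factorial_zero, Nat.cast_one]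
  rw [psiC, ← tsum_mul_left]
  have : ∀ k : ℕ, μ * (twoPiI ^ (k + 1) / (Nat.factorial (k + 1) : ℂ) * μ ^ k)
      = (twoPiI * μ) ^ (k + 1) / (Nat.factorial (k + 1) : ℂ) := by
    intro k
    rw [mul_pow]
    ring
  rw [tsum_congr this]
  ring

lemma psiC_ne_zero {μ : ℂ} (hμ : μ ∈ Sigma1) : psiC μ ≠ 0 := by
  rcases eq_or_ne μ 0 with rfl | hμ0
  · rw [psiC_zero]; exact twoPiI_ne_zero
  · intro h
    have h1 : Complex.exp (twoPiI * μ) - 1 = 0 := by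
      rw [← mul_psiC, h, mul_zero]
    have h2 : Complex.exp (twoPiI * μ) = 1 := by linear_combination h1
    rw [Complex.exp_eq_one_iff] at h2
    obtain ⟨n, hn⟩ := h2
    have hμn : μ = (n : ℂ) := by
      have hn' : twoPiI * μ = twoPiI * (n : ℂ) := by
        rw [hn, twoPiI]; ring
      exact mul_left_cancel₀ twoPiI_ne_zero hn'
    obtain ⟨ha, hb, hc, hd⟩ := hμ
    rw [hμn] at hμ0 ha hb hc hd
    simp only [Complex.sub_re, Complex.sub_im, Complex.intCast_re, Complex.intCast_im,
      Complex.one_re, Complex.one_im] at ha hb hc hd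
    have hn0 : n ≠ 0 := by
      intro h; apply hμ0; rw [h]; simp
    have hlo : (0:ℤ) ≤ n := by exact_mod_cast (by linarith : (0:ℝ) ≤ (n:ℝ))
    have hhi : n ≤ 1 := by exact_mod_cast (by linarith : (n:ℝ) ≤ 1)
    interval_cases n
    · exact hn0 rfl
    · norm_num at hd

lemma psiEnd_apply_eigen {E : Type*} [NormedAddCommGroup E] [NormedSpace ℂ E]
    [CompleteSpace E] (A : E →L[ℂ] E) {μ : ℂ} {v : E} (hv : A v = μ • v) :
    psiEnd A v = psiC μ • v := by
  have hpow : ∀ k : ℕ, (A ^ k) v = μ ^ k • v := by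
    intro k
    induction k with
    | zero => simp
    | succ k ih =>
      rw [pow_succ', ContinuousLinearMap.mul_apply, ih, map_smul, hv, smul_smul, pow_succ',
        mul_comm]
  have hsum := summable_psi_aux A
  have h1 : psiEnd A v
      = ∑' k : ℕ, ((twoPiI ^ (k + 1) / (Nat.factorial (k + 1) : ℂ)) • A ^ k) v := by
    have := (ContinuousLinearMap.apply ℂ E v).map_tsum hsum
    simpa [psiEnd] using this
  rw [h1]
  have h2 : ∀ k : ℕ, ((twoPiI ^ (k + 1) / (Nat.factorial (k + 1) : ℂ)) • A ^ k) v
      = (twoPiI ^ (k + 1) / (Nat.factorial (k + 1) : ℂ) * μ ^ k) • v := by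
    intro k
    rw [ContinuousLinearMap.smul_apply, hpow, smul_smul]
  rw [tsum_congr h2, Summable.tsum_smul_const (summable_psiC μ), psiC]

lemma psiEnd_comm {E : Type*} [NormedAddCommGroup E] [NormedSpace ℂ E]
    [CompleteSpace E] (A : E →L[ℂ] E) : A * psiEnd A = psiEnd A * A := by
  have hsum := summable_psi_aux A
  have hL := ((ContinuousLinearMap.mul ℂ (E →L[ℂ] E)) A).map_tsum hsum
  have hR := ((ContinuousLinearMap.mul ℂ (E →L[ℂ] E)).flip A).map_tsum hsum
  have h1 : A * psiEnd A
      = ∑' k : ℕ, A * ((twoPiI ^ (k + 1) / (Nat.factorial (k + 1) : ℂ)) • A ^ k) := by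
    simpa [psiEnd] using hL
  have h2 : psiEnd A * A
      = ∑' k : ℕ, ((twoPiI ^ (k + 1) / (Nat.factorial (k + 1) : ℂ)) • A ^ k) * A := by
    simpa [psiEnd] using hR
  rw [h1, h2]
  apply tsum_congr
  intro k
  rw [mul_smul_comm, smul_mul_assoc, ← pow_succ, ← pow_succ']

/-- If the spectrum of `A` is contained in Σ₁, then `ψ(A)` is invertible. -/
theorem isUnit_psiEnd
    {E : Type*} [NormedAddCommGroup E] [NormedSpace ℂ E] [FiniteDimensional ℂ E]
    (A : E →L[ℂ] E) (hA : spectrum ℂ A ⊆ Sigma1) :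
    IsUnit (psiEnd A) := by
  by_contra h
  -- if `psiEnd A` were injective it would be a unit
  have hinj : ¬ Function.Injective (psiEnd A) := by
    intro hinj
    apply h
    have hsurj := LinearMap.injective_iff_surjective.mp
      (show Function.Injective (psiEnd A).toLinearMap from hinj)
    let e := (LinearEquiv.ofBijective (psiEnd A).toLinearMap
      ⟨hinj, hsurj⟩).toContinuousLinearEquiv
    refine ⟨⟨psiEnd A, (e.symm : E →L[ℂ] E), ?_, ?_⟩, rfl⟩
    · ext x
      have h1 : psiEnd A ((e.symm : E →L[ℂ] E) x) = e (e.symm x) := rfl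
      simp only [ContinuousLinearMap.mul_apply, ContinuousLinearMap.one_apply,
        ContinuousLinearMap.coe_coe]
      rw [h1, e.apply_symm_apply]
    · ext x
      have h1 : (e.symm : E →L[ℂ] E) (psiEnd A x) = e.symm (e x) := rfl
      simp only [ContinuousLinearMap.mul_apply, ContinuousLinearMap.one_apply,
        ContinuousLinearMap.coe_coe]
      rw [h1, e.symm_apply_apply]
  -- so its kernel is nontrivial
  set K : Submodule ℂ E := LinearMap.ker (psiEnd A).toLinearMap with hKdef
  have hK : K ≠ ⊥ := by
    intro hbot
    exact hinj (LinearMap.ker_eq_bot.mp hbot)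
  haveI : Nontrivial K := Submodule.nontrivial_iff_ne_bot.mpr hK
  -- the kernel is `A`-invariant
  have hAK : ∀ x ∈ K, A.toLinearMap x ∈ K := by
    intro x hx
    have hx0 : psiEnd A x = 0 := hx
    have : psiEnd A (A x) = A (psiEnd A x) := by
      have := congrArg (fun f : E →L[ℂ] E => f x) (psiEnd_comm A)
      simpa [ContinuousLinearMap.mul_apply] using this.symm
    have hmem : psiEnd A (A x) = 0 := by rw [this, hx0, map_zero]
    exact LinearMap.mem_ker.mpr hmem
  -- an eigenvector of `A` inside the kernel
  let A' : K →ₗ[ℂ] K := A.toLinearMap.restrict hAK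
  obtain ⟨μ, hμ⟩ := Module.End.exists_eigenvalue A'
  obtain ⟨w, hw⟩ := hμ.exists_hasEigenvector
  have hwv : A' w = μ • w := Module.End.mem_eigenspace_iff.mp hw.1
  set v : E := (w : E) with hv
  have hv0 : v ≠ 0 := fun hz => hw.2 (by exact_mod_cast Subtype.ext hz)
  have hAv : A v = μ • v := by
    have := congrArg (Subtype.val) hwv
    simpa [A', LinearMap.restrict_apply] using this
  -- `μ` is in the spectrum of `A`
  have hμspec : μ ∈ spectrum ℂ A := by
    rw [spectrum.mem_iff]
    intro hu
    obtain ⟨u, hu'⟩ := hu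
    have h1 : (algebraMap ℂ (E →L[ℂ] E) μ - A) v = 0 := by
      simp [ContinuousLinearMap.sub_apply, hAv, Module.algebraMap_end_apply]
    have h2 : (↑u⁻¹ * ↑u : E →L[ℂ] E) v = v := by
      rw [u.inv_mul]; rfl
    rw [ContinuousLinearMap.mul_apply, hu', h1, map_zero] at h2
    exact hv0 h2.symm
  -- contradiction with `psiC μ ≠ 0`
  have hker : psiEnd A v = 0 := w.2
  rw [psiEnd_apply_eigen A hAv] at hker
  rcases smul_eq_zero.mp hker with h0 | h0
  · exact psiC_ne_zero (hA hμspec) h0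
  · exact hv0 h0

end
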